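/- In a finite simple bipartite graph, a vertex is contained in every maximum-cardinality matching if and only if it is absent from some maximum-cardinality independent set. -/

import Mathlib

variable {V : Type*}

/-- `M` is a maximum-cardinality matching of `G`. -/
def IsMaxMatching (G : SimpleGraph V) (M : G.Subgraph) : Prop :=
  M.IsMatching ∧ ∀ N : G.Subgraph, N.IsMatching → N.verts.ncard ≤ M.verts.ncard

/-- `I` is an independent set of `G`. -/
def IsIndep (G : SimpleGraph V) (I : Set V) : Prop :=
  ∀ a ∈ I, ∀ b ∈ I, ¬ G.Adj a b

/-- `I` is a maximum-cardinality independent set of `G`. -/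
def IsMaxIndep (G : SimpleGraph V) (I : Set V) : Prop :=
  IsIndep G I ∧ ∀ J : Set V, IsIndep G J → J.ncard ≤ I.ncard

open Finset

section Partner

variable {G : SimpleGraph V} {M : G.Subgraph}

/-- The partner of a vertex in a matching. -/
noncomputable def mpartner (M : G.Subgraph) (x : V) : V :=
  @Classical.epsilon V ⟨x⟩ (M.Adj x)

lemma mpartner_adj {x : V} (h : ∃ y, M.Adj x y) : M.Adj x (mpartner M x) :=
  haveI : Nonempty V := ⟨x⟩
  Classical.epsilon_spec h

lemma mpartner_adj' (hM : M.IsMatching) {x : V} (hx : x ∈ M.verts) :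
    M.Adj x (mpartner M x) :=
  mpartner_adj (hM hx).exists

lemma mpartner_eq (hM : M.IsMatching) {x y : V} (hxy : M.Adj x y) :
    mpartner M x = y :=
  (hM (M.edge_vert hxy)).unique (mpartner_adj ⟨y, hxy⟩) hxy

lemma mpartner_invol (hM : M.IsMatching) {x : V} (hx : x ∈ M.verts) :
    mpartner M (mpartner M x) = x :=
  mpartner_eq hM (mpartner_adj' hM hx).symm

end Partner

section Counting

variable [Fintype V] {G : SimpleGraph V} {M : G.Subgraph}

/-- Key counting lemma: given a matching `M` and an independent set `J`, there is a set `T`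
of vertices avoiding `J`, contained in `M.verts`, with `|M.verts| ≤ 2|T|`. -/
lemma key_count (hM : M.IsMatching) {J : Set V} (hJ : IsIndep G J) :
    ∃ T : Finset V, (∀ x ∈ T, x ∉ J ∧ x ∈ M.verts) ∧ M.verts.ncard ≤ 2 * T.card := by
  classical
  set ψ : V → V := fun x => if x ∈ J then mpartner M x else x with hψ
  set s : Finset V := M.verts.toFinite.toFinset with hs
  have hmem_s : ∀ x, x ∈ s ↔ x ∈ M.verts := fun x => Set.Finite.mem_toFinset _
  have hmaps : ∀ x ∈ s, ψ x ∉ J ∧ ψ x ∈ M.verts := by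
    intro x hx
    have hxv : x ∈ M.verts := (hmem_s x).1 hx
    by_cases hxJ : x ∈ J
    · have hadj := mpartner_adj' hM hxv
      have h1 : mpartner M x ∉ J := fun hc => hJ x hxJ _ hc (M.adj_sub hadj)
      simp only [hψ, if_pos hxJ]
      exact ⟨h1, M.edge_vert hadj.symm⟩
    · simp only [hψ, if_neg hxJ]
      exact ⟨hxJ, hxv⟩
  refine ⟨s.image ψ, ?_, ?_⟩
  · intro x hx
    obtain ⟨a, ha, rfl⟩ := mem_image.1 hx
    exact hmaps a ha
  · have hcard : M.verts.ncard = s.card := Set.ncard_eq_toFinset_card _ _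
    rw [hcard]
    refine card_le_mul_card_image s 2 ?_
    intro b _
    have hsub : {a ∈ s | ψ a = b} ⊆ {b, mpartner M b} := by
      intro a ha
      rw [mem_filter] at ha
      obtain ⟨has, hab⟩ := ha
      have hav : a ∈ M.verts := (hmem_s a).1 has
      by_cases haJ : a ∈ J
      · have : mpartner M a = b := by simpa [hψ, if_pos haJ] using hab
        have : a = mpartner M b := by rw [← this, mpartner_invol hM hav]
        simp [this]
      · have : a = b := by simpa [hψ, if_neg haJ] using hab
        simp [this]
    calc {a ∈ s | ψ a = b}.card ≤ ({b, mpartner M b} : Finset V).card :=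
          card_le_card hsub
      _ ≤ 2 := card_insert_le _ _ |>.trans (by simp)

/-- Easy direction: twice an independent set plus matching vertices is at most `2n`. -/
lemma easy_bound (hM : M.IsMatching) {J : Set V} (hJ : IsIndep G J) :
    2 * J.ncard + M.verts.ncard ≤ 2 * Fintype.card V := by
  classical
  obtain ⟨T, hT, hcard⟩ := key_count hM hJ
  set Jf : Finset V := J.toFinite.toFinset with hJf
  have hJcard : J.ncard = Jf.card := Set.ncard_eq_toFinset_card _ _
  have hdisj : Disjoint T Jf := by
    rw [disjoint_left]
    intro x hxT hxJ
    exact (hT x hxT).1 ((Set.Finite.mem_toFinset _).1 hxJ)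
  have hle : T.card + Jf.card ≤ Fintype.card V := by
    rw [← card_union_of_disjoint hdisj]
    exact card_le_univ _ |>.trans_eq (card_univ)
  omega

lemma matching_even (hM : M.IsMatching) : Even M.verts.ncard := by
  classical
  haveI : Fintype ↥M.verts := Fintype.ofFinite _
  rw [Set.ncard_eq_toFinset_card']
  exact hM.even_card

end Counting

/-- König's theorem packaged: in a bipartite graph there are a matching `M` and an independent
set `I` with `2|I| + |M.verts| ≥ 2n`. (Both are automatically maximum.) -/
lemma konig_package [Fintype V] (G : SimpleGraph V) (hbip : G.Colorable 2) :
    ∃ (M : G.Subgraph) (I : Set V), M.IsMatching ∧ IsIndep G I ∧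
      2 * Fintype.card V ≤ 2 * I.ncard + M.verts.ncard := by
  classical
  obtain ⟨c⟩ := hbip
  set A : Finset V := univ.filter (fun x => c x = 0) with hA
  set B : Finset V := univ.filter (fun x => ¬ c x = 0) with hB
  have hABcard : A.card + B.card = Fintype.card V := by
    rw [hA, hB, card_filter_add_card_filter_not, card_univ]
  set nb : Finset V → Finset V := fun s => s.biUnion (fun a => G.neighborFinset a) with hnb
  have hnbB : ∀ {s : Finset V}, s ⊆ A → nb s ⊆ B := by
    intro s hsA b hb
    obtain ⟨a, ha, hab⟩ := mem_biUnion.1 hb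
    have hadj : G.Adj a b := (SimpleGraph.mem_neighborFinset _ _ _).1 hab
    have hca : c a = 0 := (mem_filter.1 (hsA ha)).2
    have : c b ≠ 0 := by
      intro h0
      exact c.valid hadj (by rw [hca, h0])
    exact mem_filter.2 ⟨mem_univ _, this⟩
  -- choose S maximizing |S| + |B \ nb S|
  obtain ⟨S, hSmem, hSmax⟩ := A.powerset.exists_max_image
    (fun s => s.card + (B \ nb s).card) ⟨∅, empty_mem_powerset _⟩
  have hSA : S ⊆ A := mem_powerset.1 hSmem
  set m : ℕ := S.card + (B \ nb S).card with hm
  have hmB : B.card ≤ m := by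
    have := hSmax ∅ (empty_mem_powerset _)
    simpa [hnb] using this
  set d : ℕ := m - B.card with hd
  -- Hall's condition for bipartite graph plus d dummies
  set t : ↥A → Finset (V ⊕ Fin d) :=
    fun a => ((G.neighborFinset a.1).image Sum.inl) ∪
      (univ.image (Sum.inr : Fin d → V ⊕ Fin d)) with ht
  have hhall : ∀ s : Finset ↥A, s.card ≤ (s.biUnion t).card := by
    intro s
    rcases s.eq_empty_or_nonempty with rfl | ⟨a₀, ha₀⟩
    · simp
    · set s' : Finset V := s.image (fun a => a.1) with hs'
      have hs'card : s'.card = s.card := card_image_of_injective _ Subtype.val_injective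
      have hs'A : s' ⊆ A := by
        intro x hx
        obtain ⟨a, _, rfl⟩ := mem_image.1 hx
        exact a.2
      have hsub : (nb s').image Sum.inl ∪ univ.image (Sum.inr : Fin d → V ⊕ Fin d)
          ⊆ s.biUnion t := by
        intro x hx
        rcases mem_union.1 hx with h | h
        · obtain ⟨b, hb, rfl⟩ := mem_image.1 h
          obtain ⟨a, ha, hba⟩ := mem_biUnion.1 hb
          obtain ⟨a', ha's, rfl⟩ := mem_image.1 ha
          exact mem_biUnion.2 ⟨a', ha's, mem_union_left _ (mem_image_of_mem _ hba)⟩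
        · obtain ⟨j, _, rfl⟩ := mem_image.1 h
          exact mem_biUnion.2 ⟨a₀, ha₀, mem_union_right _ (mem_image_of_mem _ (mem_univ j))⟩
      have hdisj : Disjoint ((nb s').image Sum.inl)
          (univ.image (Sum.inr : Fin d → V ⊕ Fin d)) := by
        rw [disjoint_left]
        rintro x hx hx'
        obtain ⟨b, _, rfl⟩ := mem_image.1 hx
        obtain ⟨j, _, hj⟩ := mem_image.1 hx'
        exact Sum.inl_ne_inr hj.symm
      have hcard : (nb s').card + d ≤ (s.biUnion t).card := by
        have h1 := card_le_card hsub
        rwa [card_union_of_disjoint hdisj, card_image_of_injective _ Sum.inl_injective,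
          card_image_of_injective _ Sum.inr_injective, card_univ, Fintype.card_fin] at h1
      have hdef : s'.card + (B \ nb s').card ≤ m := hSmax s' (mem_powerset.2 hs'A)
      have h2 : (B \ nb s').card + (nb s').card = B.card :=
        card_sdiff_add_card_eq_card (hnbB hs'A)
      omega
  obtain ⟨f, hfinj, hft⟩ := (Finset.all_card_le_biUnion_card_iff_exists_injective t).1 hhall
  -- matched vertices of A
  set P : Finset ↥A := univ.filter (fun a => (f a).isLeft) with hP
  set g : ↥A → V := fun a => Sum.elim id (fun _ => a.1) (f a) with hg
  have hgP : ∀ a ∈ P, f a = Sum.inl (g a) := by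
    intro a ha
    have hl : (f a).isLeft := (mem_filter.1 ha).2
    cases hfa : f a with
    | inl b => simp [hg, hfa]
    | inr j => rw [hfa] at hl; simp at hl
  have hadjP : ∀ a ∈ P, G.Adj a.1 (g a) := by
    intro a ha
    have h1 := hft a
    rw [hgP a ha, ht] at h1
    rcases mem_union.1 h1 with h | h
    · obtain ⟨b, hb, hb'⟩ := mem_image.1 h
      obtain rfl : b = g a := Sum.inl_injective hb'
      exact (SimpleGraph.mem_neighborFinset _ _ _).1 hb
    · obtain ⟨j, _, hj⟩ := mem_image.1 h
      exact absurd hj (Sum.inr_ne_inl)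
  have hcA : ∀ a : ↥A, c a.1 = 0 := fun a => (mem_filter.1 a.2).2
  have hcg : ∀ a ∈ P, ¬ c (g a) = 0 := by
    intro a ha h0
    exact c.valid (hadjP a ha) (by rw [hcA a, h0])
  have hginj : ∀ a ∈ P, ∀ a' ∈ P, g a = g a' → a = a' := by
    intro a ha a' ha' hgg
    apply hfinj
    rw [hgP a ha, hgP a' ha', hgg]
  -- the matching subgraph
  set M : G.Subgraph :=
    { verts := ↑(P.image (fun a => a.1) ∪ P.image g)
      Adj := fun x y => (∃ a ∈ P, x = a.1 ∧ y = g a) ∨ (∃ a ∈ P, y = a.1 ∧ x = g a)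
      adj_sub := by
        rintro x y (⟨a, ha, rfl, rfl⟩ | ⟨a, ha, rfl, rfl⟩)
        · exact hadjP a ha
        · exact (hadjP a ha).symm
      edge_vert := by
        rintro x y (⟨a, ha, rfl, rfl⟩ | ⟨a, ha, rfl, rfl⟩)
        · exact mem_coe.2 (mem_union_left _ (mem_image_of_mem _ ha))
        · exact mem_coe.2 (mem_union_right _ (mem_image_of_mem _ ha))
      symm := by
        constructor
        rintro x y (⟨a, ha, rfl, rfl⟩ | ⟨a, ha, rfl, rfl⟩)
        · exact Or.inr ⟨a, ha, rfl, rfl⟩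
        · exact Or.inl ⟨a, ha, rfl, rfl⟩ } with hM
  have hMmatch : M.IsMatching := by
    intro x hx
    have hx' : x ∈ P.image (fun a => a.1) ∪ P.image g := mem_coe.1 hx
    rcases mem_union.1 hx' with h | h
    · obtain ⟨a, ha, rfl⟩ := mem_image.1 h
      refine ⟨g a, Or.inl ⟨a, ha, rfl, rfl⟩, ?_⟩
      rintro y (⟨a', ha', haa', rfl⟩ | ⟨a', ha', rfl, hga'⟩)
      · obtain rfl : a = a' := Subtype.val_injective haa'
        rfl
      · exact absurd (hcA a) (by rw [hga']; exact hcg a' ha')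
    · obtain ⟨a, ha, rfl⟩ := mem_image.1 h
      refine ⟨a.1, Or.inr ⟨a, ha, rfl, rfl⟩, ?_⟩
      rintro y (⟨a', ha', hga', rfl⟩ | ⟨a', ha', rfl, hgg⟩)
      · exact absurd (hcA a') (by rw [← hga']; exact hcg a ha)
      · obtain rfl : a = a' := hginj a ha a' ha' hgg
        rfl
  have hdisjPg : Disjoint (P.image (fun a : ↥A => a.1)) (P.image g) := by
    rw [disjoint_left]
    rintro x hx hx'
    obtain ⟨a, _, rfl⟩ := mem_image.1 hx
    obtain ⟨a', ha', hgx⟩ := mem_image.1 hx'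
    exact hcg a' ha' (by rw [hgx, hcA a])
  have hvcard : M.verts.ncard = 2 * P.card := by
    have h1 : M.verts = ↑(P.image (fun a : ↥A => a.1) ∪ P.image g) := rfl
    rw [h1, Set.ncard_coe_finset, card_union_of_disjoint hdisjPg,
      card_image_of_injective _ Subtype.val_injective,
      card_image_of_injOn (fun a ha a' ha' h => hginj a (mem_coe.1 ha) a' (mem_coe.1 ha') h)]
    omega
  -- |P| ≥ |A| - d
  have hQd : (univ \ P : Finset ↥A).card ≤ d := by
    have hsub : (univ \ P).image f ⊆ univ.image (Sum.inr : Fin d → V ⊕ Fin d) := by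
      intro x hx
      obtain ⟨a, ha, rfl⟩ := mem_image.1 hx
      have hnP : ¬ (f a).isLeft := fun h => (mem_sdiff.1 ha).2 (mem_filter.2 ⟨mem_univ _, h⟩)
      cases hfa : f a with
      | inl b => rw [hfa] at hnP; simp at hnP
      | inr j => exact mem_image_of_mem _ (mem_univ j)
    have h1 := card_le_card hsub
    rwa [card_image_of_injective _ hfinj, card_image_of_injective _ Sum.inr_injective,
      card_univ, Fintype.card_fin] at h1
  have hPQ : P.card + (univ \ P : Finset ↥A).card = Fintype.card ↥A := by
    rw [add_comm, card_sdiff_add_card_eq_card (subset_univ P), card_univ]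
  have hcardA : Fintype.card ↥A = A.card := Fintype.card_coe A
  -- the independent set
  set Ifin : Finset V := S ∪ (B \ nb S) with hIfin
  have hSB : Disjoint S (B \ nb S) := by
    rw [disjoint_left]
    intro x hxS hxB
    have h0 : c x = 0 := (mem_filter.1 (hSA hxS)).2
    exact (mem_filter.1 (mem_sdiff.1 hxB).1).2 h0
  have hIcard : Ifin.card = m := by
    rw [hIfin, card_union_of_disjoint hSB]
  have hIndep : IsIndep G ↑Ifin := by
    intro a ha b hb hadj
    have ha' := mem_coe.1 ha
    have hb' := mem_coe.1 hb
    rcases mem_union.1 ha' with haS | haB <;> rcases mem_union.1 hb' with hbS | hbB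
    · exact c.valid hadj (by
        rw [(mem_filter.1 (hSA haS)).2, (mem_filter.1 (hSA hbS)).2])
    · exact (mem_sdiff.1 hbB).2 (mem_biUnion.2 ⟨a, haS,
        (SimpleGraph.mem_neighborFinset _ _ _).2 hadj⟩)
    · exact (mem_sdiff.1 haB).2 (mem_biUnion.2 ⟨b, hbS,
        (SimpleGraph.mem_neighborFinset _ _ _).2 hadj.symm⟩)
    · have h1 : ¬ c a = 0 := (mem_filter.1 (mem_sdiff.1 haB).1).2
      have h2 : ¬ c b = 0 := (mem_filter.1 (mem_sdiff.1 hbB).1).2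
      have h3 : ∀ i : Fin 2, i ≠ 0 → i = 1 := by decide
      exact c.valid hadj (by rw [h3 _ h1, h3 _ h2])
  refine ⟨M, ↑Ifin, hMmatch, hIndep, ?_⟩
  rw [Set.ncard_coe_finset, hIcard, hvcard]
  omega

lemma exists_maxMatching [Fintype V] (G : SimpleGraph V) : ∃ M, IsMaxMatching G M := by
  classical
  set F : Finset ℕ := (Finset.range (Fintype.card V + 1)).filter
    (fun k => ∃ M : G.Subgraph, M.IsMatching ∧ M.verts.ncard = k) with hF
  have hbot : (⊥ : G.Subgraph).IsMatching := by
    intro x hx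
    simp [SimpleGraph.Subgraph.verts_bot] at hx
  have h0 : 0 ∈ F := by
    refine mem_filter.2 ⟨mem_range.2 (by omega), ⟨⊥, hbot, by simp⟩⟩
  have hne : F.Nonempty := ⟨0, h0⟩
  obtain ⟨k, hkF, hkmax⟩ := F.exists_max_image id hne
  obtain ⟨M, hM, hMk⟩ := (mem_filter.1 hkF).2
  refine ⟨M, hM, ?_⟩
  intro N hN
  have hNle : N.verts.ncard ≤ Fintype.card V := by
    have := Set.ncard_le_ncard (Set.subset_univ N.verts) (Set.finite_univ)
    rwa [Set.ncard_univ, Nat.card_eq_fintype_card] at this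
  have hNF : N.verts.ncard ∈ F :=
    mem_filter.2 ⟨mem_range.2 (by omega), ⟨N, hN, rfl⟩⟩
  have := hkmax _ hNF
  simpa [hMk] using this

/-- In a finite simple bipartite graph, a vertex is contained
in every maximum matching if and only if it is absent from some maximum
independent set. -/
theorem mem_every_maxMatching_iff_not_mem_some_maxIndep [Fintype V]
    (G : SimpleGraph V) (hbip : G.Colorable 2) (v : V) :
    (∀ M : G.Subgraph, IsMaxMatching G M → v ∈ M.verts) ↔
      ∃ I : Set V, IsMaxIndep G I ∧ v ∉ I := by
  classical
  obtain ⟨N, hNmax⟩ := exists_maxMatching G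
  constructor
  · intro hall
    -- delete v, apply König to the induced graph
    set s : Set V := {x | x ≠ v} with hs
    have hbip' : (G.induce s).Colorable 2 := by
      obtain ⟨c⟩ := hbip
      exact ⟨⟨fun x => c x.1, fun hadj => c.valid hadj⟩⟩
    obtain ⟨M'', I'', hM'', hI'', hcount⟩ := konig_package (G.induce s) hbip'
    have hcards : Fintype.card ↥s = Fintype.card V - 1 := by
      have h1 : Fintype.card ↥s = Fintype.card {x : V // ¬ x = v} := by
        apply Fintype.card_congr
        exact Equiv.refl _
      rw [h1, Fintype.card_subtype_compl, Fintype.card_subtype_eq]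
    -- lift the matching
    set emb : G.induce s ↪g G := SimpleGraph.Embedding.induce s with hemb
    set M : G.Subgraph := M''.map emb.toHom with hMdef
    have hMmatch : M.IsMatching := hM''.map emb.toHom (Subtype.val_injective)
    have hMverts : M.verts = Subtype.val '' M''.verts := rfl
    have hMcard : M.verts.ncard = M''.verts.ncard := by
      rw [hMverts, Set.ncard_image_of_injective _ Subtype.val_injective]
    have hvM : v ∉ M.verts := by
      rw [hMverts]
      rintro ⟨⟨x, hx⟩, -, hxv⟩
      exact hx hxv
    -- lift the independent set
    set I : Set V := Subtype.val '' I'' with hIdef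
    have hIindep : IsIndep G I := by
      rintro a ⟨a', ha', rfl⟩ b ⟨b', hb', rfl⟩ hadj
      exact hI'' a' ha' b' hb' hadj
    have hvI : v ∉ I := by
      rintro ⟨⟨x, hx⟩, -, hxv⟩
      exact hx hxv
    have hIcard : I.ncard = I''.ncard :=
      Set.ncard_image_of_injective _ Subtype.val_injective
    -- M is not maximum, so N beats it by at least 2
    have hMnotmax : ¬ IsMaxMatching G M := fun h => hvM (hall M h)
    have hlt : M.verts.ncard < N.verts.ncard := by
      by_contra hle
      push_neg at hle
      exact hMnotmax ⟨hMmatch, fun N' hN' => (hNmax.2 N' hN').trans hle⟩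
    obtain ⟨p, hp⟩ := matching_even hMmatch
    obtain ⟨q, hq⟩ := matching_even hNmax.1
    refine ⟨I, ⟨hIindep, ?_⟩, hvI⟩
    intro J hJ
    have hJb := easy_bound hNmax.1 hJ
    have hn1 : 1 ≤ Fintype.card V := Fintype.card_pos_iff.2 ⟨v⟩
    omega
  · rintro ⟨I, ⟨hIindep, hImax⟩, hvI⟩ M hMmax
    obtain ⟨M₀, I₀, hM₀, hI₀, hc⟩ := konig_package G hbip
    have h1 : 2 * I.ncard + M.verts.ncard ≤ 2 * Fintype.card V :=
      easy_bound hMmax.1 hIindep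
    have h2 : I₀.ncard ≤ I.ncard := hImax I₀ hI₀
    have h3 : M₀.verts.ncard ≤ M.verts.ncard := hMmax.2 M₀ hM₀
    obtain ⟨T, hT, hTcard⟩ := key_count hMmax.1 hIindep
    set Cfin : Finset V := univ \ I.toFinite.toFinset with hCfin
    have hIc : I.ncard = I.toFinite.toFinset.card := Set.ncard_eq_toFinset_card _ _
    have hCcard : Cfin.card + I.toFinite.toFinset.card = Fintype.card V := by
      rw [hCfin, card_sdiff_add_card_eq_card (subset_univ _), card_univ]
    have hTsub : T ⊆ Cfin := by
      intro x hx
      exact mem_sdiff.2 ⟨mem_univ _, fun hc' =>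
        (hT x hx).1 ((Set.Finite.mem_toFinset _).1 hc')⟩
    have hTC : T = Cfin := eq_of_subset_of_card_le hTsub (by omega)
    have hvC : v ∈ Cfin := mem_sdiff.2 ⟨mem_univ _, fun hc' =>
      hvI ((Set.Finite.mem_toFinset _).1 hc')⟩
    rw [← hTC] at hvC
    exact (hT v hvC).2
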